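/- The expected prediction error Err = E_y E_{y_new}[||mu_hat - y_new||^2] equals E_y[||y - mu_hat||^2 + 2 tau^2 df], where df = sum_i cov(mu_hat_i, y_i)/tau^2. -/

import Mathlib

open MeasureTheory

/-- Err = E_y E_{y_new}[‖μ̂ - y_new‖²] = E_y[‖y - μ̂‖² + 2τ² df]
    with df = (Σᵢ cov(μ̂ᵢ, yᵢ))/τ². -/
theorem stmt_0 (N : ℕ) (Ω : Type*) [MeasureSpace Ω]
    [IsProbabilityMeasure (volume : Measure Ω)]
    (y ynew : Ω → Fin N → ℝ) (m : (Fin N → ℝ) → Fin N → ℝ)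
    (μ : Fin N → ℝ) (τ : ℝ) (hτ : 0 < τ)
    (hmean : ∀ i, (∫ ω, y ω i) = μ i)
    (hmeannew : ∀ i, (∫ ω, ynew ω i) = μ i)
    (hvar : (∫ ω, ∑ i, (y ω i - μ i) ^ 2) = N * τ ^ 2)
    (hvarnew : (∫ ω, ∑ i, (ynew ω i - μ i) ^ 2) = N * τ ^ 2)
    (hint_y : ∀ i, Integrable (fun ω => y ω i))
    (hint_new : ∀ i, Integrable (fun ω => ynew ω i))
    (hint_m : ∀ i, Integrable (fun ω => m (y ω) i))
    (hint_sq : Integrable (fun ω => ∑ i, (y ω i - m (y ω) i) ^ 2))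
    (hint_cross : ∀ i, Integrable (fun ω => (y ω i - μ i) * m (y ω) i))
    (hint_newsq : Integrable (fun ω => ∑ i, (ynew ω i - μ i) ^ 2))
    (hint_msq : Integrable (fun ω => ∑ i, (m (y ω) i) ^ 2)) :
    (∫ ω, ∫ ω', ∑ i, (m (y ω) i - ynew ω' i) ^ 2) =
      ∫ ω, ((∑ i, (y ω i - m (y ω) i) ^ 2)
        + 2 * τ ^ 2 *
          ((∫ ω', ∑ i, (y ω' i - μ i) * (m (y ω') i - ∫ ω'', m (y ω'') i)) / τ ^ 2)) := by
  classical
  have hτ2 : (τ : ℝ) ^ 2 ≠ 0 := pow_ne_zero _ (ne_of_gt hτ)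
  have hconst : ∀ (r : ℝ), (∫ _ : Ω, r) = r := by
    intro r; simp
  have hint_ydev : ∀ i, Integrable (fun ω => y ω i - μ i) :=
    fun i => (hint_y i).sub (integrable_const _)
  have hint_newdev : ∀ i, Integrable (fun ω => ynew ω i - μ i) :=
    fun i => (hint_new i).sub (integrable_const _)
  have hy0 : ∀ i, (∫ ω, (y ω i - μ i)) = 0 := by
    intro i
    rw [integral_sub (hint_y i) (integrable_const _), hmean, hconst]; ring
  have hynew0 : ∀ i, (∫ ω, (ynew ω i - μ i)) = 0 := by
    intro i
    rw [integral_sub (hint_new i) (integrable_const _), hmeannew, hconst]; ring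
  -- Step A : inner integral over ω'
  have stepA : ∀ b : Fin N → ℝ,
      (∫ ω', ∑ i, (b i - ynew ω' i) ^ 2) = (∑ i, (b i - μ i) ^ 2) + N * τ ^ 2 := by
    intro b
    have hlinI : Integrable (fun ω' => ∑ i, (b i - μ i) * (ynew ω' i - μ i)) :=
      integrable_finset_sum _ (fun i _ => (hint_newdev i).const_mul _)
    have hlin0 : (∫ ω', ∑ i, (b i - μ i) * (ynew ω' i - μ i)) = 0 := by
      have e : (∫ ω', ∑ i, (b i - μ i) * (ynew ω' i - μ i))
          = ∑ i : Fin N, ∫ ω', (b i - μ i) * (ynew ω' i - μ i) :=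
        integral_finset_sum _ (fun i _ => (hint_newdev i).const_mul _)
      rw [e]
      refine Finset.sum_eq_zero (fun i _ => ?_)
      rw [integral_const_mul, hynew0]; ring
    have h1 : (fun ω' => ∑ i, (b i - ynew ω' i) ^ 2)
        = fun ω' => (∑ i, (b i - μ i) ^ 2) + ((∑ i, (ynew ω' i - μ i) ^ 2)
            - 2 * ∑ i, (b i - μ i) * (ynew ω' i - μ i)) := by
      funext ω'
      rw [Finset.mul_sum, ← Finset.sum_sub_distrib, ← Finset.sum_add_distrib]
      exact Finset.sum_congr rfl (fun i _ => by ring)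
    have hg : Integrable (fun ω' => (∑ i, (ynew ω' i - μ i) ^ 2)
        - 2 * ∑ i, (b i - μ i) * (ynew ω' i - μ i)) :=
      hint_newsq.sub (hlinI.const_mul 2)
    have e1 : (∫ ω', (∑ i, (b i - μ i) ^ 2) + ((∑ i, (ynew ω' i - μ i) ^ 2)
            - 2 * ∑ i, (b i - μ i) * (ynew ω' i - μ i)))
        = (∫ _ : Ω, (∑ i, (b i - μ i) ^ 2))
          + ∫ ω', ((∑ i, (ynew ω' i - μ i) ^ 2)
            - 2 * ∑ i, (b i - μ i) * (ynew ω' i - μ i)) :=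
      integral_add (integrable_const _) hg
    have e2 : (∫ ω', ((∑ i, (ynew ω' i - μ i) ^ 2)
            - 2 * ∑ i, (b i - μ i) * (ynew ω' i - μ i)))
        = (∫ ω', ∑ i, (ynew ω' i - μ i) ^ 2)
          - ∫ ω', 2 * ∑ i, (b i - μ i) * (ynew ω' i - μ i) :=
      integral_sub hint_newsq (hlinI.const_mul 2)
    have e3 : (∫ ω', 2 * ∑ i, (b i - μ i) * (ynew ω' i - μ i))
        = 2 * ∫ ω', ∑ i, (b i - μ i) * (ynew ω' i - μ i) := integral_const_mul 2 _
    rw [h1, e1, e2, e3, hlin0, hvarnew, hconst]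
    ring
  -- E[‖m - μ‖²]
  have hSdecomp : (fun ω => ∑ i, (m (y ω) i - μ i) ^ 2)
      = fun ω => (∑ i, (m (y ω) i) ^ 2) + ∑ i, (μ i ^ 2 - 2 * μ i * m (y ω) i) := by
    funext ω
    rw [← Finset.sum_add_distrib]
    exact Finset.sum_congr rfl (fun i _ => by ring)
  have hSint2 : Integrable (fun ω => ∑ i, (μ i ^ 2 - 2 * μ i * m (y ω) i)) :=
    integrable_finset_sum _ (fun i _ =>
      (integrable_const _).sub ((hint_m i).const_mul _))
  have hSint : Integrable (fun ω => ∑ i, (m (y ω) i - μ i) ^ 2) := by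
    rw [hSdecomp]; exact hint_msq.add hSint2
  have hSval : (∫ ω, ∑ i, (m (y ω) i - μ i) ^ 2)
      = (∫ ω, ∑ i, (m (y ω) i) ^ 2)
        + ∑ i, (μ i ^ 2 - 2 * μ i * ∫ ω, m (y ω) i) := by
    have e1 : (∫ ω, ((∑ i, (m (y ω) i) ^ 2) + ∑ i, (μ i ^ 2 - 2 * μ i * m (y ω) i)))
        = (∫ ω, ∑ i, (m (y ω) i) ^ 2) + ∫ ω, ∑ i, (μ i ^ 2 - 2 * μ i * m (y ω) i) :=
      integral_add hint_msq hSint2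
    have e2 : (∫ ω, ∑ i, (μ i ^ 2 - 2 * μ i * m (y ω) i))
        = ∑ i : Fin N, ∫ ω, (μ i ^ 2 - 2 * μ i * m (y ω) i) :=
      integral_finset_sum _ (fun i _ => (integrable_const _).sub ((hint_m i).const_mul _))
    have e3 : ∀ i : Fin N, (∫ ω, (μ i ^ 2 - 2 * μ i * m (y ω) i))
        = μ i ^ 2 - 2 * μ i * ∫ ω, m (y ω) i := by
      intro i
      rw [integral_sub (integrable_const _) ((hint_m i).const_mul _),
        integral_const_mul, hconst]
    rw [hSdecomp, e1, e2]
    exact congrArg _ (Finset.sum_congr rfl (fun i _ => e3 i))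
  -- LHS value
  have hLHS : (∫ ω, ∫ ω', ∑ i, (m (y ω) i - ynew ω' i) ^ 2)
      = (∫ ω, ∑ i, (m (y ω) i - μ i) ^ 2) + N * τ ^ 2 := by
    have h : (fun ω => ∫ ω', ∑ i, (m (y ω) i - ynew ω' i) ^ 2)
        = fun ω => (∑ i, (m (y ω) i - μ i) ^ 2) + N * τ ^ 2 :=
      funext (fun ω => stepA _)
    have e1 : (∫ ω, ((∑ i, (m (y ω) i - μ i) ^ 2) + (N : ℝ) * τ ^ 2))
        = (∫ ω, ∑ i, (m (y ω) i - μ i) ^ 2) + ∫ _ : Ω, (N : ℝ) * τ ^ 2 :=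
      integral_add hSint (integrable_const _)
    rw [h, e1, hconst]
  -- Step C : df numerator
  have stepC : (∫ ω', ∑ i, (y ω' i - μ i) * (m (y ω') i - ∫ ω'', m (y ω'') i))
      = ∑ i, ∫ ω, (y ω i - μ i) * m (y ω) i := by
    have h1 : (fun ω' => ∑ i, (y ω' i - μ i) * (m (y ω') i - ∫ ω'', m (y ω'') i))
        = fun ω' => (∑ i, (y ω' i - μ i) * m (y ω') i)
            - ∑ i, (y ω' i - μ i) * (∫ ω'', m (y ω'') i) := by
      funext ω'
      rw [← Finset.sum_sub_distrib]
      exact Finset.sum_congr rfl (fun i _ => by ring)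
    have hI2 : Integrable (fun ω' => ∑ i, (y ω' i - μ i) * (∫ ω'', m (y ω'') i)) :=
      integrable_finset_sum _ (fun i _ => (hint_ydev i).mul_const _)
    have e1 : (∫ ω', ((∑ i, (y ω' i - μ i) * m (y ω') i)
            - ∑ i, (y ω' i - μ i) * (∫ ω'', m (y ω'') i)))
        = (∫ ω', ∑ i, (y ω' i - μ i) * m (y ω') i)
          - ∫ ω', ∑ i, (y ω' i - μ i) * (∫ ω'', m (y ω'') i) :=
      integral_sub (integrable_finset_sum _ (fun i _ => hint_cross i)) hI2
    have e2 : (∫ ω', ∑ i, (y ω' i - μ i) * m (y ω') i)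
        = ∑ i : Fin N, ∫ ω', (y ω' i - μ i) * m (y ω') i :=
      integral_finset_sum _ (fun i _ => hint_cross i)
    have e3 : (∫ ω', ∑ i, (y ω' i - μ i) * (∫ ω'', m (y ω'') i))
        = ∑ i : Fin N, ∫ ω', (y ω' i - μ i) * (∫ ω'', m (y ω'') i) :=
      integral_finset_sum _ (fun i _ => (hint_ydev i).mul_const _)
    have e4 : ∀ i : Fin N, (∫ ω', (y ω' i - μ i) * (∫ ω'', m (y ω'') i)) = 0 := by
      intro i
      rw [integral_mul_const, hy0]; ring
    rw [h1, e1, e2, e3, Finset.sum_congr rfl (fun i _ => e4 i)]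
    simp
  -- RHS value
  have hRHS : (∫ ω, ((∑ i, (y ω i - m (y ω) i) ^ 2)
        + 2 * τ ^ 2 *
          ((∫ ω', ∑ i, (y ω' i - μ i) * (m (y ω') i - ∫ ω'', m (y ω'') i)) / τ ^ 2)))
      = (∫ ω, ∑ i, (y ω i - m (y ω) i) ^ 2)
        + 2 * ∑ i, ∫ ω, (y ω i - μ i) * m (y ω) i := by
    have e1 : (∫ ω, ((∑ i, (y ω i - m (y ω) i) ^ 2)
        + 2 * τ ^ 2 *
          ((∫ ω', ∑ i, (y ω' i - μ i) * (m (y ω') i - ∫ ω'', m (y ω'') i)) / τ ^ 2)))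
        = (∫ ω, ∑ i, (y ω i - m (y ω) i) ^ 2)
          + ∫ _ : Ω, (2 * τ ^ 2 *
            ((∫ ω', ∑ i, (y ω' i - μ i) * (m (y ω') i - ∫ ω'', m (y ω'') i)) / τ ^ 2)) :=
      integral_add hint_sq (integrable_const _)
    rw [e1, hconst, stepC]
    field_simp
  -- Step E : use hvar to compute E‖y-m‖²
  have hdecomp : (fun ω => ∑ i, (y ω i - μ i) ^ 2)
      = fun ω => (∑ i, (y ω i - m (y ω) i) ^ 2)
          + (2 * ∑ i, (y ω i - μ i) * m (y ω) i
            - (∑ i, (m (y ω) i) ^ 2)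
            + ∑ i, (2 * μ i * m (y ω) i - 2 * μ i * y ω i + μ i ^ 2)) := by
    funext ω
    rw [Finset.mul_sum, ← Finset.sum_sub_distrib, ← Finset.sum_add_distrib,
      ← Finset.sum_add_distrib]
    exact Finset.sum_congr rfl (fun i _ => by ring)
  have hrestI : Integrable (fun ω => ∑ i, (2 * μ i * m (y ω) i - 2 * μ i * y ω i + μ i ^ 2)) :=
    integrable_finset_sum _ (fun i _ =>
      (((hint_m i).const_mul _).sub ((hint_y i).const_mul _)).add (integrable_const _))
  have hcrossI : Integrable (fun ω => ∑ i, (y ω i - μ i) * m (y ω) i) :=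
    integrable_finset_sum _ (fun i _ => hint_cross i)
  have hrestval : (∫ ω, ∑ i, (2 * μ i * m (y ω) i - 2 * μ i * y ω i + μ i ^ 2))
      = ∑ i, (2 * μ i * (∫ ω, m (y ω) i) - 2 * μ i * μ i + μ i ^ 2) := by
    have e1 : (∫ ω, ∑ i, (2 * μ i * m (y ω) i - 2 * μ i * y ω i + μ i ^ 2))
        = ∑ i : Fin N, ∫ ω, (2 * μ i * m (y ω) i - 2 * μ i * y ω i + μ i ^ 2) :=
      integral_finset_sum _ (fun i _ =>
        (((hint_m i).const_mul _).sub ((hint_y i).const_mul _)).add (integrable_const _))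
    rw [e1]
    refine Finset.sum_congr rfl (fun i _ => ?_)
    have e2 : (∫ ω, (2 * μ i * m (y ω) i - 2 * μ i * y ω i + μ i ^ 2))
        = (∫ ω, (2 * μ i * m (y ω) i - 2 * μ i * y ω i)) + ∫ _ : Ω, μ i ^ 2 :=
      integral_add (((hint_m i).const_mul _).sub ((hint_y i).const_mul _)) (integrable_const _)
    have e3 : (∫ ω, (2 * μ i * m (y ω) i - 2 * μ i * y ω i))
        = (∫ ω, 2 * μ i * m (y ω) i) - ∫ ω, 2 * μ i * y ω i :=
      integral_sub ((hint_m i).const_mul _) ((hint_y i).const_mul _)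
    rw [e2, e3, integral_const_mul, integral_const_mul, hmean, hconst]
  have hcrossval : (∫ ω, ∑ i, (y ω i - μ i) * m (y ω) i)
      = ∑ i : Fin N, ∫ ω, (y ω i - μ i) * m (y ω) i :=
    integral_finset_sum _ (fun i _ => hint_cross i)
  have hE : (N : ℝ) * τ ^ 2
      = (∫ ω, ∑ i, (y ω i - m (y ω) i) ^ 2)
        + (2 * (∑ i : Fin N, ∫ ω, (y ω i - μ i) * m (y ω) i)
          - (∫ ω, ∑ i, (m (y ω) i) ^ 2)
          + ∑ i, (2 * μ i * (∫ ω, m (y ω) i) - 2 * μ i * μ i + μ i ^ 2)) := by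
    have hg : Integrable (fun ω => 2 * ∑ i, (y ω i - μ i) * m (y ω) i
          - (∑ i, (m (y ω) i) ^ 2)
          + ∑ i, (2 * μ i * m (y ω) i - 2 * μ i * y ω i + μ i ^ 2)) :=
      ((hcrossI.const_mul 2).sub hint_msq).add hrestI
    have e1 : (∫ ω, ((∑ i, (y ω i - m (y ω) i) ^ 2)
          + (2 * ∑ i, (y ω i - μ i) * m (y ω) i
            - (∑ i, (m (y ω) i) ^ 2)
            + ∑ i, (2 * μ i * m (y ω) i - 2 * μ i * y ω i + μ i ^ 2))))
        = (∫ ω, ∑ i, (y ω i - m (y ω) i) ^ 2)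
          + ∫ ω, (2 * ∑ i, (y ω i - μ i) * m (y ω) i
            - (∑ i, (m (y ω) i) ^ 2)
            + ∑ i, (2 * μ i * m (y ω) i - 2 * μ i * y ω i + μ i ^ 2)) :=
      integral_add hint_sq hg
    have e2 : (∫ ω, (2 * ∑ i, (y ω i - μ i) * m (y ω) i
            - (∑ i, (m (y ω) i) ^ 2)
            + ∑ i, (2 * μ i * m (y ω) i - 2 * μ i * y ω i + μ i ^ 2)))
        = (∫ ω, (2 * ∑ i, (y ω i - μ i) * m (y ω) i - (∑ i, (m (y ω) i) ^ 2)))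
          + ∫ ω, ∑ i, (2 * μ i * m (y ω) i - 2 * μ i * y ω i + μ i ^ 2) :=
      integral_add ((hcrossI.const_mul 2).sub hint_msq) hrestI
    have e3 : (∫ ω, (2 * ∑ i, (y ω i - μ i) * m (y ω) i - (∑ i, (m (y ω) i) ^ 2)))
        = (∫ ω, 2 * ∑ i, (y ω i - μ i) * m (y ω) i) - ∫ ω, ∑ i, (m (y ω) i) ^ 2 :=
      integral_sub (hcrossI.const_mul 2) hint_msq
    rw [← hvar, hdecomp, e1, e2, e3, integral_const_mul, hcrossval, hrestval]
  -- conclude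
  rw [hLHS, hRHS, hSval]
  have hsum : ∑ i, (μ i ^ 2 - 2 * μ i * ∫ ω, m (y ω) i)
      = - ∑ i, (2 * μ i * (∫ ω, m (y ω) i) - 2 * μ i * μ i + μ i ^ 2) := by
    rw [← Finset.sum_neg_distrib]
    exact Finset.sum_congr rfl (fun i _ => by ring)
  rw [hsum]
  linarith [hE]
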